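/- Let ((X_t)_{t≥0}, (L^t_1,…,L^t_n)_{t≥0}) be an instance of an n-dimensional GLexRSM for a stopping time T, fix 1 ≤ k ≤ n and s, M ∈ ℕ, and define D, F, and (Y_t)_{t≥0} as follows: D = {ω ∈ Ω | X_s[k](ω) ≤ M and ω ∈ ∪_{j=k}^n L^s_j}; F(ω) = inf{t ≥ s | ω ∉ ∪_{j'=k}^n L^t_{j'}}; Y_t(ω) = 0 if ω ∉ D, Y_t(ω) = M if ω ∈ D and t < s, Y_t(ω) = X_t[k](ω) if ω ∈ D, t ≥ s and F(ω) > t, and Y_t(ω) = X_{F(ω)}[k](ω) otherwise. Then for every t ≥ s it holds that E[Y_s] ≥ E[Y_t] + Σ_{r=s}^{t−1} P[L^r_k ∩ D ∩ {F > r}]. -/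

import Mathlib

open MeasureTheory Set
open scoped Classical
open scoped ENNReal

/-- An instance of an `n`-dimensional generalized lexicographic ranking supermartingale
(GLexRSM) for a stopping time `T` (with values in `ℕ∞`): the process `X` together with the
`ℱ t`-measurable sets `L t j` partitioning `{T > t}`, satisfying measurability/integrability,
the lexicographic expected decrease conditions, partial non-negativity, and expected leftward
non-negativity. -/
def IsGLexRSMInstance {Ω : Type*} {m : MeasurableSpace Ω} (μ : Measure Ω)
    (ℱ : Filtration ℕ m) (T : Ω → ℕ∞) {n : ℕ}
    (X : ℕ → Fin n → Ω → ℝ) (L : ℕ → Fin n → Set Ω) : Prop :=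
  -- the sets `L t j` partition `{T > t}`
  (∀ t : ℕ, (⋃ j, L t j) = {ω | (t : ℕ∞) < T ω}) ∧
  (∀ t : ℕ, ∀ j j' : Fin n, j ≠ j' → Disjoint (L t j) (L t j')) ∧
  (∀ t : ℕ, ∀ j : Fin n, MeasurableSet[ℱ t] (L t j)) ∧
  -- (1) each `X t j` is `ℱ t`-measurable
  (∀ t : ℕ, ∀ j : Fin n, StronglyMeasurable[ℱ t] (X t j)) ∧
  -- (2) the relevant conditional expectations exist: each `X t j` is integrable
  (∀ t : ℕ, ∀ j : Fin n, Integrable (X t j) μ) ∧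
  -- (3a) expected non-increase on `⋃_{j' ≥ j} L t j'`
  (∀ t : ℕ, ∀ j : Fin n, ∀ ω ∈ ⋃ j' ≥ j, L t j',
      (μ[X (t + 1) j | ℱ t]) ω ≤ X t j ω) ∧
  -- (3b) expected decrease by 1 on `L t j`
  (∀ t : ℕ, ∀ j : Fin n, ∀ ω ∈ L t j,
      (μ[X (t + 1) j | ℱ t]) ω ≤ X t j ω - 1) ∧
  -- (3c) non-negativity on `⋃_{j' ≥ j} L t j'`
  (∀ t : ℕ, ∀ j : Fin n, ∀ ω ∈ ⋃ j' ≥ j, L t j', 0 ≤ X t j ω) ∧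
  -- (3d) expected leftward non-negativity, where `L (t+1) 0 = {T ≤ t+1}`
  (∀ t : ℕ, ∀ j : Fin n, ∀ ω ∈ ⋃ j' ≥ j, L t j',
      0 ≤ (μ[Set.indicator
              ({ω' | T ω' ≤ ((t + 1 : ℕ) : ℕ∞)} ∪ ⋃ j' < j, L (t + 1) j')
              (X (t + 1) j) | ℱ t]) ω)

/-- For a GLexRSM instance with the auxiliary data `D`, `F`, `Y`, for every `t ≥ s`:
`E[Y s] ≥ E[Y t] + Σ_{r=s}^{t−1} P[L r k ∩ D ∩ {F > r}]`. -/
theorem glexrsm_aux_process_expectation_sum_bound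
    {Ω : Type*} {m : MeasurableSpace Ω} (μ : Measure Ω) [IsProbabilityMeasure μ]
    (ℱ : Filtration ℕ m) (T : Ω → ℕ∞)
    (hT : ∀ t : ℕ, MeasurableSet[ℱ t] {ω | T ω ≤ (t : ℕ∞)})
    {n : ℕ} (X : ℕ → Fin n → Ω → ℝ) (L : ℕ → Fin n → Set Ω)
    (hinst : IsGLexRSMInstance μ ℱ T X L)
    (k : Fin n) (s M : ℕ)
    (D : Set Ω) (hD : D = {ω | X s k ω ≤ (M : ℝ) ∧ ω ∈ ⋃ j ≥ k, L s j})
    (F : Ω → ℕ∞)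
    (hF : ∀ ω, F ω = sInf {u : ℕ∞ | ∃ r : ℕ, u = (r : ℕ∞) ∧ s ≤ r ∧ ω ∉ ⋃ j' ≥ k, L r j'})
    (Y : ℕ → Ω → ℝ)
    (hY : ∀ t ω, Y t ω =
      if ω ∈ D then
        (if t < s then (M : ℝ)
         else if (t : ℕ∞) < F ω then X t k ω
         else X (F ω).toNat k ω)
      else 0)
    (hYint : ∀ t, Integrable (Y t) μ) :
    ∀ t : ℕ, s ≤ t →
      ∫ ω, Y t ω ∂μ +
          ∑ r ∈ Finset.Ico s t, (μ (L r k ∩ D ∩ {ω | (r : ℕ∞) < F ω})).toReal ≤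
        ∫ ω, Y s ω ∂μ := by
  obtain ⟨hpart, hdisj, hLmeas, hXmeas, hXint, h3a, h3b, h3c, h3d⟩ := hinst
  -- characterization of `F ω > r`
  have hFlt : ∀ (r : ℕ) (ω : Ω), (r : ℕ∞) < F ω ↔
      ∀ r' : ℕ, s ≤ r' → r' ≤ r → ω ∈ ⋃ j' ≥ k, L r' j' := by
    intro r ω
    rw [hF]
    constructor
    · intro h r' hs' hr'
      by_contra hmem
      have h2 : sInf {u : ℕ∞ | ∃ r : ℕ, u = (r : ℕ∞) ∧ s ≤ r ∧ ω ∉ ⋃ j' ≥ k, L r j'}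
          ≤ (r' : ℕ∞) := sInf_le ⟨r', rfl, hs', hmem⟩
      have h3 : r < r' := Nat.cast_lt.mp (h.trans_le h2)
      omega
    · intro h
      have hle : ((r + 1 : ℕ) : ℕ∞)
          ≤ sInf {u : ℕ∞ | ∃ r : ℕ, u = (r : ℕ∞) ∧ s ≤ r ∧ ω ∉ ⋃ j' ≥ k, L r j'} := by
        refine le_sInf ?_
        rintro u ⟨r', rfl, hs', hmem⟩
        have hrr : r < r' := by
          by_contra hle'
          exact hmem (h r' hs' (not_lt.mp hle'))
        exact_mod_cast hrr
      exact lt_of_lt_of_le (by exact_mod_cast Nat.lt_succ_self r) hle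
  have hFmem : ∀ (r : ℕ) (ω : Ω), s ≤ r → (r : ℕ∞) < F ω → ω ∈ ⋃ j' ≥ k, L r j' :=
    fun r ω hs' h => (hFlt r ω).mp h r hs' le_rfl
  -- measurability facts
  have hU : ∀ r' : ℕ, MeasurableSet[ℱ r'] (⋃ j' ≥ k, L r' j') := fun r' =>
    MeasurableSet.iUnion fun j' => MeasurableSet.iUnion fun _ => hLmeas r' j'
  have hDmeas : MeasurableSet[ℱ s] D := by
    rw [hD]
    have : {ω | X s k ω ≤ (M : ℝ) ∧ ω ∈ ⋃ j ≥ k, L s j}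
        = (X s k ⁻¹' Set.Iic (M : ℝ)) ∩ ⋃ j ≥ k, L s j := rfl
    rw [this]
    exact ((hXmeas s k).measurable measurableSet_Iic).inter (hU s)
  have hGset : ∀ r : ℕ, {ω | (r : ℕ∞) < F ω} = ⋂ r' ∈ Set.Icc s r, ⋃ j' ≥ k, L r' j' := by
    intro r
    ext ω
    simp only [Set.mem_setOf_eq, Set.mem_iInter, Set.mem_Icc, hFlt r ω, and_imp]
  have hGmeas : ∀ r : ℕ, s ≤ r → MeasurableSet[ℱ r] (D ∩ {ω | (r : ℕ∞) < F ω}) := by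
    intro r hr
    refine (ℱ.mono hr _ hDmeas).inter ?_
    rw [hGset]
    exact MeasurableSet.biInter (Set.to_countable _) fun r' hr' => ℱ.mono hr'.2 _ (hU r')
  -- one-step bound
  have step : ∀ r : ℕ, s ≤ r →
      ∫ ω, Y (r + 1) ω ∂μ + (μ (L r k ∩ D ∩ {ω | (r : ℕ∞) < F ω})).toReal
        ≤ ∫ ω, Y r ω ∂μ := by
    intro r hr
    set G : Set Ω := D ∩ {ω | (r : ℕ∞) < F ω} with hGdef
    have hGF : MeasurableSet[ℱ r] G := hGmeas r hr
    have hGm : MeasurableSet G := ℱ.le r _ hGF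
    -- pointwise decomposition
    have hdecomp : ∀ ω, Y (r + 1) ω = G.indicator (X (r + 1) k) ω + Y r ω
        - G.indicator (X r k) ω := by
      intro ω
      by_cases hD' : ω ∈ D
      · by_cases hFr : (r : ℕ∞) < F ω
        · have hG : ω ∈ G := ⟨hD', hFr⟩
          rw [hY r ω, hY (r + 1) ω, Set.indicator_of_mem hG, Set.indicator_of_mem hG,
            if_pos hD', if_pos hD', if_neg (by omega : ¬ r < s),
            if_neg (by omega : ¬ r + 1 < s), if_pos hFr]
          by_cases hFr1 : ((r + 1 : ℕ) : ℕ∞) < F ω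
          · rw [if_pos hFr1]; ring
          · rw [if_neg hFr1]
            have hle : F ω ≤ ((r + 1 : ℕ) : ℕ∞) := not_lt.mp hFr1
            obtain ⟨m, hm, hmle⟩ := ENat.le_coe_iff.mp hle
            have hrm : r < m := by exact_mod_cast hm ▸ hFr
            have : m = r + 1 := by omega
            rw [hm, this, ENat.toNat_coe]
            ring
        · have hG : ω ∉ G := fun h => hFr h.2
          have hle : F ω ≤ (r : ℕ∞) := not_lt.mp hFr
          have hFr1 : ¬ ((r + 1 : ℕ) : ℕ∞) < F ω := by
            refine not_lt.mpr (hle.trans ?_)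
            exact_mod_cast Nat.le_succ r
          rw [hY r ω, hY (r + 1) ω, Set.indicator_of_notMem hG,
            Set.indicator_of_notMem hG, if_pos hD', if_pos hD',
            if_neg (by omega : ¬ r < s), if_neg (by omega : ¬ r + 1 < s),
            if_neg hFr, if_neg hFr1]
          ring
      · have hG : ω ∉ G := fun h => hD' h.1
        rw [hY r ω, hY (r + 1) ω, Set.indicator_of_notMem hG, Set.indicator_of_notMem hG,
          if_neg hD', if_neg hD']
        ring
    have hInd1 : Integrable (G.indicator (X (r + 1) k)) μ := (hXint (r + 1) k).indicator hGm
    have hInd0 : Integrable (G.indicator (X r k)) μ := (hXint r k).indicator hGm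
    have hindInt : Integrable ((L r k).indicator fun _ => (1 : ℝ)) μ :=
      (integrable_const (1 : ℝ)).indicator (ℱ.le r _ (hLmeas r k))
    have hset : L r k ∩ D ∩ {ω | (r : ℕ∞) < F ω} = G ∩ L r k := by
      rw [hGdef, Set.inter_assoc, Set.inter_comm]
    -- integral decomposition
    have hYeq : ∫ ω, Y (r + 1) ω ∂μ
        = ∫ ω, G.indicator (X (r + 1) k) ω ∂μ + ∫ ω, Y r ω ∂μ
          - ∫ ω, G.indicator (X r k) ω ∂μ := by
      have h1 : ∫ ω, Y (r + 1) ω ∂μ = ∫ ω, (G.indicator (X (r + 1) k) ω + Y r ω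
          - G.indicator (X r k) ω) ∂μ :=
        integral_congr_ae (Filter.Eventually.of_forall hdecomp)
      have hadd : Integrable (fun ω => G.indicator (X (r + 1) k) ω + Y r ω) μ :=
        hInd1.add (hYint r)
      rw [h1, integral_sub hadd hInd0, integral_add hInd1 (hYint r)]
    -- the conditional-expectation bound
    have key : ∫ ω, G.indicator (X (r + 1) k) ω ∂μ
        ≤ ∫ ω, G.indicator (X r k) ω ∂μ
          - (μ (L r k ∩ D ∩ {ω | (r : ℕ∞) < F ω})).toReal := by
      rw [integral_indicator hGm, integral_indicator hGm,
        ← setIntegral_condExp (ℱ.le r) (hXint (r + 1) k) hGF]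
      have hmono : ∫ ω in G, (μ[X (r + 1) k|ℱ r]) ω ∂μ
          ≤ ∫ ω in G, (X r k ω - (L r k).indicator (fun _ => (1 : ℝ)) ω) ∂μ := by
        refine setIntegral_mono_on integrable_condExp.integrableOn
          ((hXint r k).sub hindInt).integrableOn hGm ?_
        intro ω hω
        have hUω : ω ∈ ⋃ j' ≥ k, L r j' := hFmem r ω hr hω.2
        by_cases hL : ω ∈ L r k
        · rw [Set.indicator_of_mem hL]
          exact h3b r k ω hL
        · rw [Set.indicator_of_notMem hL, sub_zero]
          exact h3a r k ω hUω
      have hsplit : ∫ ω in G, (X r k ω - (L r k).indicator (fun _ => (1 : ℝ)) ω) ∂μ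
          = ∫ ω in G, X r k ω ∂μ - ∫ ω in G, (L r k).indicator (fun _ => (1 : ℝ)) ω ∂μ :=
        integral_sub (hXint r k).integrableOn hindInt.integrableOn
      have hindval : ∫ ω in G, (L r k).indicator (fun _ => (1 : ℝ)) ω ∂μ
          = (μ (L r k ∩ D ∩ {ω | (r : ℕ∞) < F ω})).toReal := by
        rw [setIntegral_indicator (ℱ.le r _ (hLmeas r k)), setIntegral_const, smul_eq_mul,
          mul_one, hset, measureReal_def]
      linarith [hmono, hsplit ▸ hmono]
    linarith [hYeq, key]
  -- induction
  intro t ht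
  induction t, ht using Nat.le_induction with
  | base => simp
  | succ t ht ih =>
    rw [Finset.sum_Ico_succ_top ht]
    have hstep := step t ht
    linarith
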